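/- Let λ be a regular cardinal, let ℭ be a semi-λ-algebroidal category all of whose morphisms are monomorphisms, and for some μ < λ let F : μ → ℭ be a μ-chain such that F(i) is λ-small for every i < μ. Then every colimit S of F in ℭ is λ-small. -/

import Mathlib

universe u u₁ v₁ u₂ v₂ u₃ v₃

open CategoryTheory CategoryTheory.Limits

namespace DGFraisse

variable {C : Type u₁} [Category.{v₁} C]

/-- An object `A` of a category is `λ`-small if every morphism from `A` into the colimit of a
`λ`-chain factors through some member of the chain. -/
def LamSmall (lam : Cardinal.{u}) (A : C) : Prop :=
  ∀ (H : lam.ord.ToType ⥤ C) (c : Cocone H), IsColimit c →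
    ∀ h : A ⟶ c.pt, ∃ (j : lam.ord.ToType) (g : A ⟶ H.obj j), g ≫ c.ι.app j = h

variable (C)

/-- A category is semi-`λ`-algebroidal if all `μ`-chains (`μ ≤ λ`) of `λ`-small objects have
colimits, and every object is the colimit of a `λ`-chain of `λ`-small objects. -/
def SemiAlgebroidal (lam : Cardinal.{u}) : Prop :=
  (∀ (μ : Ordinal.{u}), μ ≤ lam.ord → ∀ (H : μ.ToType ⥤ C),
      (∀ i, LamSmall lam (H.obj i)) → ∃ c : Cocone H, Nonempty (IsColimit c)) ∧
  (∀ A : C, ∃ (H : lam.ord.ToType ⥤ C) (c : Cocone H),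
      Nonempty (IsColimit c) ∧ (∀ i, LamSmall lam (H.obj i)) ∧ Nonempty (c.pt ≅ A))

/-- A category is `λ`-algebroidal if it is semi-`λ`-algebroidal, has at most `λ` isomorphism
classes of `λ`-small objects, and at most `λ` morphisms between any two `λ`-small objects. -/
def Algebroidal (lam : Cardinal.{u}) : Prop :=
  SemiAlgebroidal C lam ∧
  (∃ S : Set C, Cardinal.lift.{u} (Cardinal.mk S) ≤ Cardinal.lift.{u₁} lam ∧
      ∀ A : C, LamSmall lam A → ∃ B ∈ S, Nonempty (A ≅ B)) ∧
  (∀ A B : C, LamSmall lam A → LamSmall lam B →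
      Cardinal.lift.{u} (Cardinal.mk (A ⟶ B)) ≤ Cardinal.lift.{v₁} lam)

variable {C}

/-- `U` is universal for the objects satisfying `P`. -/
def UniversalFor (P : C → Prop) (U : C) : Prop := ∀ X, P X → Nonempty (X ⟶ U)

/-- `U` is homogeneous for the objects satisfying `P`. -/
def HomogeneousFor (P : C → Prop) (U : C) : Prop :=
  ∀ X, P X → ∀ f g : X ⟶ U, ∃ h : U ≅ U, f ≫ h.hom = g

/-- `U` is saturated for the objects satisfying `P`. -/
def SaturatedFor (P : C → Prop) (U : C) : Prop :=
  ∀ X Y, P X → P Y → ∀ (f : X ⟶ U) (g : X ⟶ Y), ∃ h : Y ⟶ U, g ≫ h = f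

/-- The joint embedding property for the subcategory of objects satisfying `P`. -/
def JEPOn (P : C → Prop) : Prop :=
  ∀ X Y : C, P X → P Y → ∃ Z : C, P Z ∧ Nonempty (X ⟶ Z) ∧ Nonempty (Y ⟶ Z)

/-- The amalgamation property for the subcategory of objects satisfying `P`. -/
def APOn (P : C → Prop) : Prop :=
  ∀ (X Y Z : C), P X → P Y → P Z → ∀ (f : X ⟶ Y) (g : X ⟶ Z),
    ∃ (W : C), P W ∧ ∃ (f' : Y ⟶ W) (g' : Z ⟶ W), f ≫ f' = g ≫ g'

variable {A : Type u₁} [Category.{v₁} A] {B : Type u₂} [Category.{v₂} B]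
variable {C' : Type u₃} [Category.{v₃} C']

/-- A functor is `λ`-cocontinuous if it maps colimiting cocones of `λ`-chains to colimiting
cocones. -/
def LamCocontinuous (lam : Cardinal.{u}) (F : A ⥤ C') : Prop :=
  ∀ (H : lam.ord.ToType ⥤ A) (c : Cocone H), IsColimit c →
    Nonempty (IsColimit (F.mapCocone c))

/-- A functor is `μ_{<λ}`-cocontinuous if it maps colimiting cocones of `μ`-chains of `λ`-small
objects to colimiting cocones. -/
def MuCocontinuous (lam : Cardinal.{u}) (μ : Ordinal.{u}) (F : A ⥤ C') : Prop :=
  ∀ (H : μ.ToType ⥤ A), (∀ i, LamSmall lam (H.obj i)) →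
    ∀ (c : Cocone H), IsColimit c → Nonempty (IsColimit (F.mapCocone c))

/-- `F` preserves `λ`-smallness with respect to `G`. -/
def PreservesLamSmallness (lam : Cardinal.{u}) (F : A ⥤ C') (G : B ⥤ C') : Prop :=
  ∀ (H : lam.ord.ToType ⥤ B) (c : Cocone H), IsColimit c →
    ∀ (X : A), LamSmall lam X → ∀ f : F.obj X ⟶ G.obj c.pt,
      ∃ (j : lam.ord.ToType) (h : F.obj X ⟶ G.obj (H.obj j)), h ≫ G.map (c.ι.app j) = f

/-- The `(F,G)`-joint embedding property, restricted to `λ`-small objects. -/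
def FGJepOnSmall (lam : Cardinal.{u}) (F : A ⥤ C') (G : B ⥤ C') : Prop :=
  ∀ (B₁ B₂ : A), LamSmall lam B₁ → LamSmall lam B₂ →
    ∀ (T : B), LamSmall lam T → ∀ (h₁ : F.obj B₁ ⟶ G.obj T) (h₂ : F.obj B₂ ⟶ G.obj T),
      ∃ (Cc : A) (_ : LamSmall lam Cc) (T' : B) (_ : LamSmall lam T')
        (f₁ : B₁ ⟶ Cc) (f₂ : B₂ ⟶ Cc) (h : F.obj Cc ⟶ G.obj T') (k₁ k₂ : T ⟶ T'),
        F.map f₁ ≫ h = h₁ ≫ G.map k₁ ∧ F.map f₂ ≫ h = h₂ ≫ G.map k₂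

/-- The `(F,G)`-amalgamation property, restricted to `λ`-small objects. -/
def FGAmalgOnSmall (lam : Cardinal.{u}) (F : A ⥤ C') (G : B ⥤ C') : Prop :=
  ∀ (X B₁ B₂ : A), LamSmall lam X → LamSmall lam B₁ → LamSmall lam B₂ →
    ∀ (f₁ : X ⟶ B₁) (f₂ : X ⟶ B₂) (T : B), LamSmall lam T →
      ∀ (h₁ : F.obj B₁ ⟶ G.obj T) (h₂ : F.obj B₂ ⟶ G.obj T),
        F.map f₁ ≫ h₁ = F.map f₂ ≫ h₂ →
        ∃ (Cc : A) (_ : LamSmall lam Cc) (g₁ : B₁ ⟶ Cc) (g₂ : B₂ ⟶ Cc),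
          f₁ ≫ g₁ = f₂ ≫ g₂ ∧
          ∃ (T' : B) (_ : LamSmall lam T') (k : T ⟶ T') (h : F.obj Cc ⟶ G.obj T'),
            F.map g₁ ≫ h = h₁ ≫ G.map k ∧ F.map g₂ ≫ h = h₂ ≫ G.map k

end DGFraisse


open DGFraisse CategoryTheory CategoryTheory.Limits in
/-- Lemma: in a semi-`λ`-algebroidal category (λ regular) all of whose morphisms are
monomorphisms, the colimit of a `μ`-chain (`μ < λ`) of `λ`-small objects is `λ`-small. -/
theorem statement19
    (lam : Cardinal.{u}) (hreg : lam.IsRegular)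
    {C : Type u₁} [Category.{v₁} C]
    (hC : SemiAlgebroidal C lam)
    (hmono : ∀ {X Y : C} (f : X ⟶ Y), Mono f)
    (μ : Ordinal.{u}) (hμ : μ < lam.ord)
    (H : μ.ToType ⥤ C) (hsmall : ∀ i, LamSmall lam (H.obj i))
    (c : Cocone H) (hc : IsColimit c) :
    LamSmall lam c.pt := by
  intro G d hd h
  choose j g hg using fun i : μ.ToType => hsmall i G d hd (c.ι.app i ≫ h)
  let e := (Ordinal.ToType.mk (o := lam.ord))
  have hcard : Cardinal.mk μ.ToType < lam.ord.cof := by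
    rw [Cardinal.mk_toType, hreg.cof_eq]
    exact Cardinal.lt_ord.mp hμ
  have hsup : (⨆ i, ((e.symm (j i) : Set.Iio lam.ord) : Ordinal)) < lam.ord :=
    Ordinal.iSup_lt_of_lt_cof hcard (fun i => (e.symm (j i)).2)
  set jstar : lam.ord.ToType := e ⟨_, hsup⟩ with hjstar
  have hle : ∀ i, j i ≤ jstar := by
    intro i
    have : e.symm (j i) ≤ ⟨_, hsup⟩ := by
      exact Subtype.coe_le_coe.mp (Ordinal.le_iSup _ i)
    simpa using (e.le_iff_le.mpr this).trans_eq (by simp [e]; rfl)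
  let K : Cocone H :=
    { pt := G.obj jstar
      ι := { app := fun i => g i ≫ G.map (homOfLE (hle i))
             naturality := fun i i' f => by
               have := hmono (d.ι.app jstar)
               rw [← cancel_mono (d.ι.app jstar)]
               simp only [Category.assoc, Functor.const_obj_obj, Functor.const_obj_map,
                 Category.comp_id]
               rw [d.w (homOfLE (hle i)), d.w (homOfLE (hle i')), hg i', hg i,
                 ← Category.assoc, c.w f] } }
  refine ⟨jstar, hc.desc K, hc.hom_ext fun i => ?_⟩
  rw [← Category.assoc, hc.fac K i]
  show (g i ≫ G.map (homOfLE (hle i))) ≫ d.ι.app jstar = c.ι.app i ≫ h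
  rw [Category.assoc, d.w (homOfLE (hle i)), hg i]
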